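/- The rate of the BG distribution equals 1/σ: that is, lim_{x→∞} −(d/dx) ln f_BG(x; μ, σ, δ) = 1/σ. -/

import Mathlib

open Real Filter

/-- The bimodal Gumbel density. -/
noncomputable def bgPDF (μ σ δ x : ℝ) : ℝ :=
  ((1 - δ * x) ^ 2 + 1) *
    Real.exp (-((x - μ) / σ) - Real.exp (-((x - μ) / σ))) /
      (σ * (1 + δ ^ 2 * σ ^ 2 * π ^ 2 / 6 +
        (δ * μ + δ * σ * Real.eulerMascheroniConstant - 1) ^ 2))

lemma aux_atTop : Tendsto (fun u : ℝ => u / (u ^ 2 + 1)) atTop (nhds 0) := by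
  have hb : ∀ᶠ u : ℝ in atTop, 0 ≤ u / (u ^ 2 + 1) :=
    eventually_atTop.2 ⟨0, fun u hu => by positivity⟩
  have hub : ∀ᶠ u : ℝ in atTop, u / (u ^ 2 + 1) ≤ 1 / u :=
    eventually_atTop.2 ⟨1, fun u hu => by
      rw [div_le_div_iff₀ (by positivity) (by linarith)]
      nlinarith⟩
  have h1 : Tendsto (fun u : ℝ => 1 / u) atTop (nhds 0) := by
    simpa [one_div] using tendsto_inv_atTop_zero
  exact tendsto_of_tendsto_of_tendsto_of_le_of_le' tendsto_const_nhds h1 hb hub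

lemma aux_atBot : Tendsto (fun u : ℝ => u / (u ^ 2 + 1)) atBot (nhds 0) := by
  have h := aux_atTop.comp tendsto_neg_atBot_atTop
  have h2 : Tendsto (fun u : ℝ => -(u / (u ^ 2 + 1))) atBot (nhds 0) := by
    simpa [Function.comp_def, neg_div] using h
  simpa using h2.neg

lemma limA (δ : ℝ) :
    Tendsto (fun x : ℝ => 2 * (1 - δ * x) * (-δ) / ((1 - δ * x) ^ 2 + 1))
      atTop (nhds 0) := by
  rcases eq_or_ne δ 0 with hδ | hδ
  · simpa [hδ] using (tendsto_const_nhds : Tendsto (fun _ : ℝ => (0:ℝ)) atTop _)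
  · have key : ∀ l : Filter ℝ, Tendsto (fun x : ℝ => 1 - δ * x) atTop l →
        Tendsto (fun u : ℝ => u / (u ^ 2 + 1)) l (nhds 0) →
        Tendsto (fun x : ℝ => 2 * (1 - δ * x) * (-δ) / ((1 - δ * x) ^ 2 + 1))
          atTop (nhds 0) := by
      intro l h1 h2
      have h3 : Tendsto (fun x : ℝ => 2 * (-δ) * ((1 - δ * x) / ((1 - δ * x) ^ 2 + 1)))
          atTop (nhds 0) := by
        simpa [Function.comp_def] using (h2.comp h1).const_mul (2 * (-δ))
      exact h3.congr fun x => by ring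
    rcases hδ.lt_or_gt with h | h
    · -- δ < 0 : 1 - δ x → atTop
      refine key atTop ?_ aux_atTop
      have : Tendsto (fun x : ℝ => -δ * x) atTop atTop :=
        tendsto_id.const_mul_atTop (by linarith)
      have := tendsto_atTop_add_const_left atTop 1 this
      refine this.congr fun x => by ring
    · refine key atBot ?_ aux_atBot
      have : Tendsto (fun x : ℝ => δ * x) atTop atTop :=
        tendsto_id.const_mul_atTop h
      have h2 : Tendsto (fun x : ℝ => -(δ * x)) atTop atBot :=
        tendsto_neg_atTop_atBot.comp this
      have := tendsto_atBot_add_const_left atTop 1 h2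
      refine this.congr fun x => by ring

theorem bg_rate (μ σ δ : ℝ) (hσ : 0 < σ) :
    Tendsto (fun x : ℝ => -(deriv (fun y => Real.log (bgPDF μ σ δ y)) x))
      atTop (nhds (1 / σ)) := by
  set C : ℝ := σ * (1 + δ ^ 2 * σ ^ 2 * π ^ 2 / 6 +
        (δ * μ + δ * σ * Real.eulerMascheroniConstant - 1) ^ 2) with hCdef
  have hC : 0 < C := by positivity
  have hg : ∀ y : ℝ, Real.log (bgPDF μ σ δ y) =
      Real.log ((1 - δ * y) ^ 2 + 1) +
        (-((y - μ) / σ) - Real.exp (-((y - μ) / σ))) - Real.log C := by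
    intro y
    have hN : (0:ℝ) < (1 - δ * y) ^ 2 + 1 := by positivity
    rw [bgPDF, ← hCdef, Real.log_div (by positivity) hC.ne',
      Real.log_mul hN.ne' (Real.exp_ne_zero _), Real.log_exp]
  have hderiv : ∀ x : ℝ, deriv (fun y => Real.log (bgPDF μ σ δ y)) x =
      2 * (1 - δ * x) * (-δ) / ((1 - δ * x) ^ 2 + 1) +
        (-(1 / σ) - Real.exp (-((x - μ) / σ)) * -(1 / σ)) := by
    intro x
    have hfg : (fun y => Real.log (bgPDF μ σ δ y)) =
        fun y => Real.log ((1 - δ * y) ^ 2 + 1) +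
          (-((y - μ) / σ) - Real.exp (-((y - μ) / σ))) - Real.log C :=
      funext hg
    rw [hfg]
    have h1 : HasDerivAt (fun y : ℝ => 1 - δ * y) (-δ) x := by
      simpa using ((hasDerivAt_id x).const_mul δ).const_sub 1
    have h2 : HasDerivAt (fun y : ℝ => (1 - δ * y) ^ 2 + 1)
        (2 * (1 - δ * x) * (-δ)) x := by
      simpa using (h1.pow 2).add_const 1
    have h3 : HasDerivAt (fun y : ℝ => Real.log ((1 - δ * y) ^ 2 + 1))
        (2 * (1 - δ * x) * (-δ) / ((1 - δ * x) ^ 2 + 1)) x :=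
      h2.log (by positivity)
    have h4 : HasDerivAt (fun y : ℝ => -((y - μ) / σ)) (-(1 / σ)) x := by
      simpa [Pi.neg_def] using (((hasDerivAt_id x).sub_const μ).div_const σ).neg
    have h5 : HasDerivAt (fun y : ℝ => Real.exp (-((y - μ) / σ)))
        (Real.exp (-((x - μ) / σ)) * -(1 / σ)) x := h4.exp
    exact ((h3.add (h4.sub h5)).sub_const (Real.log C)).deriv
  have hexp : Tendsto (fun x : ℝ => Real.exp (-((x - μ) / σ))) atTop (nhds 0) := by
    apply Real.tendsto_exp_atBot.comp
    apply tendsto_neg_atTop_atBot.comp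
    exact (tendsto_atTop_add_const_right atTop (-μ) tendsto_id).atTop_div_const hσ
      |>.congr fun x => by simp only [id_eq]; ring
  have hmain : Tendsto (fun x : ℝ =>
      -(2 * (1 - δ * x) * (-δ) / ((1 - δ * x) ^ 2 + 1)) +
        (1 / σ + Real.exp (-((x - μ) / σ)) * -(1 / σ))) atTop
      (nhds (-0 + (1 / σ + 0 * -(1 / σ)))) :=
    (limA δ).neg.add (tendsto_const_nhds.add (hexp.mul tendsto_const_nhds))
  have hmain' : Tendsto (fun x : ℝ =>
      -(2 * (1 - δ * x) * (-δ) / ((1 - δ * x) ^ 2 + 1)) +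
        (1 / σ + Real.exp (-((x - μ) / σ)) * -(1 / σ))) atTop (nhds (1 / σ)) := by
    simpa using hmain
  refine hmain'.congr fun x => ?_
  rw [hderiv x]
  ring
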